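/- arXiv:2407.00522 — 3 statements merged into one kernel-verified Lean document; each statement's English description precedes it below -/
import Mathlib

section
/- For every complex number p with 0 < |p| < 1 and every z ∈ ℂ ∖ {0}, the infinite product ∏_{s=1}^∞ (1 − p^s z)(1 − p^s z^{−1})/(1 − p^s)^2 converges (the family of factors is multipliable), and the resulting function ϑ(z) = (1 − z)·∏_{s=1}^∞ (1 − p^s z)(1 − p^s z^{−1})/(1 − p^s)^2 is analytic on ℂ ∖ {0}. -/
open Filter Topology Finset

/-- The Jacobi theta function
`ϑ(z) = (1 − z) · ∏_{s=1}^∞ (1 − p^s z)(1 − p^s z⁻¹)/(1 − p^s)^2`. -/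
noncomputable def jTheta (p z : ℂ) : ℂ :=
  (1 - z) * ∏' s : ℕ,
    (1 - p ^ (s + 1) * z) * (1 - p ^ (s + 1) * z⁻¹) / (1 - p ^ (s + 1)) ^ 2

/-- If `∑ ‖c n‖ < ∞`, then `∏ (1 + c n)` converges. -/
lemma aux_multipliable_one_add (c : ℕ → ℂ) (hc : Summable fun n => ‖c n‖) :
    Multipliable (fun n => 1 + c n) := by
  obtain ⟨k, hk⟩ := Filter.eventually_atTop.mp
    (hc.tendsto_atTop_zero.eventually_le_const (by norm_num : (0:ℝ) < 1/2))
  apply Multipliable.comp_nat_add (k := k)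
  have h2 : ∀ n : ℕ, ‖c (n + k)‖ ≤ 1/2 := fun n => hk _ (Nat.le_add_left k n)
  have hne : ∀ n : ℕ, (1 : ℂ) + c (n + k) ≠ 0 := by
    intro n h
    have hc1 : c (n + k) = -1 := by linear_combination h
    have := h2 n
    rw [hc1] at this
    norm_num at this
  have hlog : ∀ _ : Unit, Summable fun n => Complex.log ((fun n (_ : Unit) => 1 + c (n + k)) n ()) := by
    intro _
    apply Summable.of_norm_bounded (g := fun n => (3/2) * ‖c (n + k)‖)
      (((summable_nat_add_iff k).mpr hc).mul_left _)
    intro n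
    exact Complex.norm_log_one_add_half_le_self (h2 n)
  exact Complex.multipliable_of_summable_log (hlog ())

/-- If `∑ ‖a n‖ < ∞`, then `w ↦ ∏' n, (1 + a n * w)` is entire. -/
lemma aux_differentiable_tprod (a : ℕ → ℂ) (ha : Summable fun n => ‖a n‖) :
    Differentiable ℂ (fun w : ℂ => ∏' n, (1 + a n * w)) := by
  have hmul : ∀ w : ℂ, Multipliable (fun n => 1 + a n * w) := fun w =>
    aux_multipliable_one_add _ (by simpa [norm_mul] using ha.mul_right ‖w‖)
  suffices H : ∀ R : ℝ, 0 < R →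
      DifferentiableOn ℂ (fun w : ℂ => ∏' n, (1 + a n * w)) (Metric.ball 0 R) by
    intro w
    have h1 : w ∈ Metric.ball (0:ℂ) (‖w‖ + 1) := by
      simp only [Metric.mem_ball, dist_zero_right]; linarith
    exact ((H (‖w‖ + 1) (by positivity)) w h1).differentiableAt
      (Metric.isOpen_ball.mem_nhds h1)
  intro R hR
  set T := ∑' n, ‖a n‖ with hT
  set P : ℕ → ℂ → ℂ := fun N w => ∏ n ∈ Finset.range N, (1 + a n * w) with hP
  set d : ℕ → ℂ → ℂ := fun n w => P n w * (a n * w) with hd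
  -- bound on partial products on the ball
  have hPbound : ∀ N : ℕ, ∀ w ∈ Metric.ball (0:ℂ) R, ‖P N w‖ ≤ Real.exp (T * R) := by
    intro N w hw
    have hwR : ‖w‖ ≤ R := le_of_lt (by simpa [Metric.mem_ball, dist_zero_right] using hw)
    calc ‖P N w‖ ≤ ∏ n ∈ Finset.range N, ‖1 + a n * w‖ := norm_prod_le _ _
    _ ≤ ∏ n ∈ Finset.range N, Real.exp (‖a n‖ * R) := by
        apply Finset.prod_le_prod (fun n _ => norm_nonneg _)
        intro n _
        have hb : ‖1 + a n * w‖ ≤ 1 + ‖a n‖ * R := by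
          refine (norm_add_le _ _).trans ?_
          rw [norm_one, norm_mul]
          have : ‖a n‖ * ‖w‖ ≤ ‖a n‖ * R := by
            exact mul_le_mul_of_nonneg_left hwR (norm_nonneg _)
          linarith
        have := Real.add_one_le_exp (‖a n‖ * R)
        linarith
    _ = Real.exp (∑ n ∈ Finset.range N, ‖a n‖ * R) := (Real.exp_sum _ _).symm
    _ ≤ Real.exp (T * R) := by
        apply Real.exp_le_exp.mpr
        rw [← Finset.sum_mul]
        exact mul_le_mul_of_nonneg_right
          (Summable.sum_le_tsum _ (fun n _ => norm_nonneg _) ha) hR.le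
  -- bound on the differences
  have hu : Summable (fun n => Real.exp (T * R) * R * ‖a n‖) := ha.mul_left _
  have hdb : ∀ (n : ℕ) (w : ℂ), w ∈ Metric.ball (0:ℂ) R →
      ‖d n w‖ ≤ Real.exp (T * R) * R * ‖a n‖ := by
    intro n w hw
    have hwR : ‖w‖ ≤ R := le_of_lt (by simpa [Metric.mem_ball, dist_zero_right] using hw)
    have h1 : ‖d n w‖ = ‖P n w‖ * (‖a n‖ * ‖w‖) := by
      simp [hd, norm_mul]
    rw [h1]
    calc ‖P n w‖ * (‖a n‖ * ‖w‖) ≤ Real.exp (T * R) * (‖a n‖ * R) := by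
          apply mul_le_mul (hPbound n w hw) ?_ (by positivity) (Real.exp_pos _).le
          exact mul_le_mul_of_nonneg_left hwR (norm_nonneg _)
    _ = Real.exp (T * R) * R * ‖a n‖ := by ring
  -- telescoping
  have hsum_eq : ∀ (N : ℕ) (w : ℂ), ∑ n ∈ Finset.range N, d n w = P N w - 1 := by
    intro N w
    have hstep : ∀ n, d n w = P (n + 1) w - P n w := by
      intro n
      simp only [hd, hP, Finset.prod_range_succ]
      ring
    calc ∑ n ∈ Finset.range N, d n w = ∑ n ∈ Finset.range N, (P (n + 1) w - P n w) := by
          exact Finset.sum_congr rfl fun n _ => hstep n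
    _ = P N w - P 0 w := Finset.sum_range_sub (fun n => P n w) N
    _ = P N w - 1 := by simp [hP]
  -- uniform convergence of partial products on the ball
  have htu := tendstoUniformlyOn_tsum_nat hu hdb
  have hPl : TendstoUniformlyOn P (fun w => (∑' n, d n w) + 1) atTop (Metric.ball (0:ℂ) R) := by
    have hconst : TendstoUniformlyOn (fun (_ : ℕ) (_ : ℂ) => (1:ℂ)) (fun _ => (1:ℂ))
        atTop (Metric.ball (0:ℂ) R) := tendsto_const_nhds.tendstoUniformlyOn_const _
    have h1 := htu.add hconst
    refine h1.congr ?_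
    filter_upwards with N
    intro w _
    have := hsum_eq N w
    simp only [Pi.add_apply] at *
    rw [this]
    ring
  -- identify the limit with the infinite product, pointwise on the ball
  have hlim : ∀ w ∈ Metric.ball (0:ℂ) R, (∑' n, d n w) + 1 = ∏' n, (1 + a n * w) := by
    intro w hw
    have hs : Summable (fun n => d n w) :=
      Summable.of_norm_bounded hu (fun n => hdb n w hw)
    have h1 : Tendsto (fun N => ∑ n ∈ Finset.range N, d n w) atTop (𝓝 (∑' n, d n w)) :=
      hs.hasSum.tendsto_sum_nat
    have h2 : Tendsto (fun N => P N w) atTop (𝓝 (∏' n, (1 + a n * w))) :=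
      (hmul w).hasProd.tendsto_prod_nat
    have h3 : Tendsto (fun N => P N w) atTop (𝓝 ((∑' n, d n w) + 1)) := by
      have h4 := h1.add_const (1 : ℂ)
      refine h4.congr fun N => ?_
      rw [hsum_eq N w]
      ring
    exact tendsto_nhds_unique h3 h2
  -- each partial product is differentiable
  have hPdiff : ∀ N : ℕ, DifferentiableOn ℂ (P N) (Metric.ball (0:ℂ) R) := by
    intro N
    apply Differentiable.differentiableOn
    apply Differentiable.fun_finsetProd
    intro i _
    exact (differentiable_const (1:ℂ)).add (differentiable_id.const_mul (a i))
  have hdiff : DifferentiableOn ℂ (fun w => (∑' n, d n w) + 1) (Metric.ball (0:ℂ) R) := by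
    apply TendstoLocallyUniformlyOn.differentiableOn hPl.tendstoLocallyUniformlyOn
      ?_ Metric.isOpen_ball
    filter_upwards with N using hPdiff N
  exact hdiff.congr fun w hw => (hlim w hw).symm

/-- For `0 < |p| < 1`, the infinite product defining the Jacobi theta function converges
for every `z ≠ 0`, and `ϑ` is analytic on `ℂ ∖ {0}`. -/
theorem jTheta_multipliable_and_analytic (p : ℂ)
    (hp0 : 0 < ‖p‖) (hp1 : ‖p‖ < 1) :
    (∀ z : ℂ, z ≠ 0 → Multipliable (fun s : ℕ =>
      (1 - p ^ (s + 1) * z) * (1 - p ^ (s + 1) * z⁻¹) / (1 - p ^ (s + 1)) ^ 2)) ∧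
    AnalyticOnNhd ℂ (jTheta p) {z : ℂ | z ≠ 0} := by
  have hp1' : ‖p‖ < 1 := hp1
  set a : ℕ → ℂ := fun s => p ^ (s + 1) * ((1 - p ^ (s + 1)) ^ 2)⁻¹ with ha_def
  have hq : ∀ s : ℕ, ‖p ^ (s + 1)‖ ≤ ‖p‖ := by
    intro s
    rw [norm_pow]
    calc ‖p‖ ^ (s + 1) ≤ ‖p‖ ^ 1 :=
          pow_le_pow_of_le_one (norm_nonneg _) hp1'.le (by omega)
    _ = ‖p‖ := pow_one _
  have hlb : ∀ s : ℕ, 1 - ‖p‖ ≤ ‖1 - p ^ (s + 1)‖ := by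
    intro s
    have h1 : ‖(1:ℂ)‖ - ‖p ^ (s + 1)‖ ≤ ‖1 - p ^ (s + 1)‖ := norm_sub_norm_le _ _
    rw [norm_one] at h1
    linarith [hq s]
  have hpos : (0:ℝ) < 1 - ‖p‖ := by linarith
  have hne : ∀ s : ℕ, (1 : ℂ) - p ^ (s + 1) ≠ 0 := by
    intro s h
    have := hlb s
    rw [h, norm_zero] at this
    linarith
  -- summability of ‖a‖
  have hsa : Summable (fun s => ‖a s‖) := by
    have hgeo : Summable (fun s : ℕ => ‖p‖ ^ s * (‖p‖ * ((1 - ‖p‖)⁻¹) ^ 2)) :=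
      (summable_geometric_of_lt_one (norm_nonneg p) hp1').mul_right _
    apply Summable.of_nonneg_of_le (fun s => norm_nonneg _) ?_ hgeo
    intro s
    have h1 : ‖a s‖ = ‖p‖ ^ (s + 1) * (‖1 - p ^ (s + 1)‖ ^ 2)⁻¹ := by
      rw [ha_def]
      simp [norm_mul, norm_inv, norm_pow]
    rw [h1, pow_succ]
    have h2 : (‖1 - p ^ (s + 1)‖ ^ 2)⁻¹ ≤ ((1 - ‖p‖) ^ 2)⁻¹ := by
      apply inv_anti₀ (by positivity)
      exact pow_le_pow_left₀ hpos.le (hlb s) 2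
    calc ‖p‖ ^ s * ‖p‖ * (‖1 - p ^ (s + 1)‖ ^ 2)⁻¹
        ≤ ‖p‖ ^ s * ‖p‖ * ((1 - ‖p‖) ^ 2)⁻¹ := by
          apply mul_le_mul_of_nonneg_left h2 (by positivity)
    _ = ‖p‖ ^ s * (‖p‖ * ((1 - ‖p‖)⁻¹) ^ 2) := by
          rw [inv_pow]
          ring
  -- the key algebraic identity
  have key : ∀ z : ℂ, z ≠ 0 → ∀ s : ℕ,
      (1 - p ^ (s + 1) * z) * (1 - p ^ (s + 1) * z⁻¹) / (1 - p ^ (s + 1)) ^ 2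
        = 1 + a s * (2 - z - z⁻¹) := by
    intro z hz s
    have h1 := hne s
    rw [ha_def]
    field_simp
    ring
  constructor
  · -- multipliability
    intro z hz
    have hfe : (fun s : ℕ =>
        (1 - p ^ (s + 1) * z) * (1 - p ^ (s + 1) * z⁻¹) / (1 - p ^ (s + 1)) ^ 2)
        = fun s => 1 + a s * (2 - z - z⁻¹) := funext fun s => key z hz s
    rw [hfe]
    exact aux_multipliable_one_add _
      (by simpa [norm_mul] using hsa.mul_right ‖(2:ℂ) - z - z⁻¹‖)
  · -- analyticity
    have hopen : IsOpen {z : ℂ | z ≠ 0} := isOpen_ne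
    apply DifferentiableOn.analyticOnNhd ?_ hopen
    have hG := aux_differentiable_tprod a hsa
    have hh : DifferentiableOn ℂ (fun z : ℂ => 2 - z - z⁻¹) {z : ℂ | z ≠ 0} :=
      ((differentiableOn_const (2:ℂ)).sub differentiableOn_id).sub differentiableOn_inv
    have hdiff : DifferentiableOn ℂ
        (fun z : ℂ => (1 - z) * ∏' n, (1 + a n * (2 - z - z⁻¹))) {z : ℂ | z ≠ 0} := by
      apply DifferentiableOn.mul
      · exact ((differentiable_const (1:ℂ)).sub differentiable_id).differentiableOn
      · intro z hz
        show DifferentiableWithinAt ℂ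
          ((fun w : ℂ => ∏' n, (1 + a n * w)) ∘ (fun z : ℂ => 2 - z - z⁻¹)) {z : ℂ | z ≠ 0} z
        exact DifferentiableAt.comp_differentiableWithinAt z (hG _) (hh z hz)
    apply hdiff.congr
    intro z hz
    have hz' : z ≠ 0 := hz
    unfold jTheta
    congr 1
    exact tprod_congr fun s => key z hz' s
end

section
/- Let σ be a complex-valued function analytic on an open neighborhood of the closed annulus {z ∈ ℂ : |p| ≤ |z| ≤ 1}, and let L_1, …, L_r be pairwise distinct complex numbers with |p| < |L_i| < 1 for all i. Then (1/2πi)∮_{|z|=1} σ(z)/(z·∏_{i=1}^r ϑ(L_i/z)) dz − (1/2πi)∮_{|z|=|p|} σ(z)/(z·∏_{i=1}^r ϑ(L_i/z)) dz = Σ_{i=1}^r σ(L_i)/∏_{j≠i} ϑ(L_j/L_i). (This is the residue computation underlying the elliptic push-forward formula along a projective bundle.) -/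
open Finset

namespace EllipticAux

open Complex Metric Set Filter

variable {p : ℂ}

noncomputable def lterm (p : ℂ) (s : ℕ) (z : ℂ) : ℂ :=
  Complex.log (1 - p ^ (s + 1) * z) + Complex.log (1 - p ^ (s + 1) * z⁻¹)
    - 2 * Complex.log (1 - p ^ (s + 1))

noncomputable def lsum (p z : ℂ) : ℂ := ∑' s, lterm p s z

lemma one_sub_ne_zero {w : ℂ} (h : ‖w‖ < 1) : (1 : ℂ) - w ≠ 0 := by
  intro h0
  have : w = 1 := by linear_combination -h0
  rw [this] at h; simp at h

lemma one_sub_mem_slitPlane {w : ℂ} (h : ‖w‖ < 1) : (1 : ℂ) - w ∈ Complex.slitPlane := by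
  rw [Complex.mem_slitPlane_iff]
  left
  have h1 : w.re ≤ ‖w‖ := by
    calc w.re ≤ |w.re| := le_abs_self _
    _ ≤ ‖w‖ := Complex.abs_re_le_norm w
    _ = ‖w‖ := rfl
  simp only [Complex.sub_re, Complex.one_re]
  linarith

lemma norm_log_one_sub_le {w : ℂ} {m : ℝ} (hm : m < 1) (hw : ‖w‖ ≤ m) :
    ‖Complex.log (1 - w)‖ ≤ (1 - m)⁻¹ * ‖w‖ := by
  have h0 : (0:ℝ) ≤ m := le_trans (norm_nonneg w) hw
  have hw1 : ‖(-w)‖ < 1 := by rw [norm_neg]; exact lt_of_le_of_lt hw hm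
  have hb := Complex.norm_log_one_add_le hw1
  rw [norm_neg] at hb
  have heq : (1 : ℂ) - w = 1 + -w := by ring
  rw [heq]
  refine le_trans hb ?_
  set t := ‖w‖ with ht
  have ht0 : 0 ≤ t := norm_nonneg w
  have htm : t ≤ m := hw
  have h1t : (0:ℝ) < 1 - m := by linarith
  have hinv : (1 - t)⁻¹ ≤ (1 - m)⁻¹ := by
    apply inv_anti₀ h1t
    linarith
  have hstep : t ^ 2 * (1 - t)⁻¹ / 2 ≤ t ^ 2 * (1 - m)⁻¹ / 2 := by
    gcongr
  have hu : (1 - m) * (1 - m)⁻¹ = 1 := mul_inv_cancel₀ (ne_of_gt h1t)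
  have hu0 : (0:ℝ) < (1 - m)⁻¹ := inv_pos.mpr h1t
  have final : t ^ 2 * (1 - m)⁻¹ / 2 + t ≤ (1 - m)⁻¹ * t := by
    nlinarith [mul_le_mul_of_nonneg_left htm ht0, mul_nonneg ht0 hu0.le]
  linarith

lemma lterm_norm_le {m : ℝ} (hm0 : 0 ≤ m) (hm : m < 1) {s : ℕ} {z : ℂ}
    (h1 : ‖p ^ (s + 1) * z‖ ≤ m ^ (s + 1)) (h2 : ‖p ^ (s + 1) * z⁻¹‖ ≤ m ^ (s + 1))
    (h3 : ‖p ^ (s + 1)‖ ≤ m ^ (s + 1)) :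
    ‖lterm p s z‖ ≤ 4 * (1 - m)⁻¹ * m ^ (s + 1) := by
  have hms : m ^ (s + 1) ≤ m := pow_le_of_le_one hm0 hm.le (Nat.succ_ne_zero s)
  have b1 := norm_log_one_sub_le hm (h1.trans hms)
  have b2 := norm_log_one_sub_le hm (h2.trans hms)
  have b3 := norm_log_one_sub_le hm (h3.trans hms)
  have c1 : ‖Complex.log (1 - p ^ (s + 1) * z)‖ ≤ (1 - m)⁻¹ * m ^ (s + 1) := by
    refine b1.trans ?_
    gcongr
  have c2 : ‖Complex.log (1 - p ^ (s + 1) * z⁻¹)‖ ≤ (1 - m)⁻¹ * m ^ (s + 1) := by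
    refine b2.trans ?_
    gcongr
  have c3 : ‖Complex.log (1 - p ^ (s + 1))‖ ≤ (1 - m)⁻¹ * m ^ (s + 1) := by
    refine b3.trans ?_
    gcongr
  have h2norm : ‖(2 : ℂ) * Complex.log (1 - p ^ (s + 1))‖
      = 2 * ‖Complex.log (1 - p ^ (s + 1))‖ := by
    rw [norm_mul]; norm_num
  calc ‖lterm p s z‖ ≤ ‖Complex.log (1 - p ^ (s + 1) * z) + Complex.log (1 - p ^ (s + 1) * z⁻¹)‖
        + ‖(2 : ℂ) * Complex.log (1 - p ^ (s + 1))‖ := norm_sub_le _ _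
    _ ≤ ‖Complex.log (1 - p ^ (s + 1) * z)‖ + ‖Complex.log (1 - p ^ (s + 1) * z⁻¹)‖
        + 2 * ‖Complex.log (1 - p ^ (s + 1))‖ := by
        rw [h2norm]; exact add_le_add (norm_add_le _ _) le_rfl
    _ ≤ 4 * (1 - m)⁻¹ * m ^ (s + 1) := by linarith

lemma lterm_bound_on (hp0 : p ≠ 0) (hp1 : ‖p‖ < 1) {a b : ℝ} (ha : ‖p‖ < a) (hb : b < ‖p‖⁻¹) :
    ∃ m : ℝ, 0 ≤ m ∧ m < 1 ∧ ∀ s : ℕ, ∀ z : ℂ, a ≤ ‖z‖ → ‖z‖ ≤ b →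
      ‖p ^ (s + 1) * z‖ ≤ m ^ (s + 1) ∧ ‖p ^ (s + 1) * z⁻¹‖ ≤ m ^ (s + 1) ∧
        ‖p ^ (s + 1)‖ ≤ m ^ (s + 1) ∧ ‖lterm p s z‖ ≤ 4 * (1 - m)⁻¹ * m ^ (s + 1) := by
  have hpn : (0:ℝ) < ‖p‖ := norm_pos_iff.mpr hp0
  have ha0 : (0:ℝ) < a := lt_of_le_of_lt (norm_nonneg p) ha
  refine ⟨max (‖p‖ * b) (max (‖p‖ / a) ‖p‖), ?_, ?_, ?_⟩
  · exact le_max_of_le_right (le_max_of_le_right (norm_nonneg p))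
  · refine max_lt ?_ (max_lt ?_ hp1)
    · calc ‖p‖ * b < ‖p‖ * ‖p‖⁻¹ := by
            apply mul_lt_mul_of_pos_left hb hpn
        _ = 1 := mul_inv_cancel₀ (ne_of_gt hpn)
    · rw [div_lt_one ha0]; exact ha
  · intro s z hz1 hz2
    set m := max (‖p‖ * b) (max (‖p‖ / a) ‖p‖) with hm
    have hm0 : 0 ≤ m := le_max_of_le_right (le_max_of_le_right (norm_nonneg p))
    have hm1 : m < 1 := by
      refine max_lt ?_ (max_lt ?_ hp1)
      · calc ‖p‖ * b < ‖p‖ * ‖p‖⁻¹ := mul_lt_mul_of_pos_left hb hpn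
          _ = 1 := mul_inv_cancel₀ (ne_of_gt hpn)
      · rw [div_lt_one ha0]; exact ha
    have hpm : ‖p‖ ≤ m := le_max_of_le_right (le_max_right _ _)
    have hps : ‖p‖ ^ s ≤ m ^ s := pow_le_pow_left₀ (norm_nonneg p) hpm s
    have hz0 : (0:ℝ) < ‖z‖ := lt_of_lt_of_le ha0 hz1
    have k1 : ‖p ^ (s + 1) * z‖ ≤ m ^ (s + 1) := by
      rw [norm_mul, norm_pow, pow_succ, pow_succ]
      calc ‖p‖ ^ s * ‖p‖ * ‖z‖ = ‖p‖ ^ s * (‖p‖ * ‖z‖) := by ring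
        _ ≤ m ^ s * (‖p‖ * b) := by
            apply mul_le_mul hps (by nlinarith) (by positivity) (by positivity)
        _ ≤ m ^ s * m := by
            apply mul_le_mul_of_nonneg_left (le_max_left _ _) (by positivity)
    have k2 : ‖p ^ (s + 1) * z⁻¹‖ ≤ m ^ (s + 1) := by
      rw [norm_mul, norm_pow, norm_inv, pow_succ, pow_succ]
      have hzinv : ‖z‖⁻¹ ≤ a⁻¹ := inv_anti₀ ha0 hz1
      calc ‖p‖ ^ s * ‖p‖ * ‖z‖⁻¹ = ‖p‖ ^ s * (‖p‖ * ‖z‖⁻¹) := by ring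
        _ ≤ m ^ s * (‖p‖ / a) := by
            apply mul_le_mul hps ?_ (by positivity) (by positivity)
            rw [div_eq_mul_inv]
            exact mul_le_mul_of_nonneg_left hzinv (norm_nonneg p)
        _ ≤ m ^ s * m := by
            apply mul_le_mul_of_nonneg_left (le_max_of_le_right (le_max_left _ _)) (by positivity)
    have k3 : ‖p ^ (s + 1)‖ ≤ m ^ (s + 1) := by
      rw [norm_pow]
      exact pow_le_pow_left₀ (norm_nonneg p) hpm (s + 1)
    exact ⟨k1, k2, k3, lterm_norm_le hm0 hm1 k1 k2 k3⟩

lemma summable_aux {m : ℝ} (hm0 : 0 ≤ m) (hm1 : m < 1) :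
    Summable (fun s : ℕ => 4 * (1 - m)⁻¹ * m ^ (s + 1)) := by
  have : Summable (fun s : ℕ => m ^ s) := summable_geometric_of_lt_one hm0 hm1
  simpa [pow_succ, mul_comm, mul_assoc, mul_left_comm] using ((this.mul_right m).mul_left (4 * (1 - m)⁻¹))

lemma lsum_summable (hp0 : p ≠ 0) (hp1 : ‖p‖ < 1) {z : ℂ}
    (hz1 : ‖p‖ < ‖z‖) (hz2 : ‖z‖ < ‖p‖⁻¹) :
    Summable (fun s => lterm p s z) := by
  obtain ⟨m, hm0, hm1, hbd⟩ := lterm_bound_on hp0 hp1 hz1 hz2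
  exact Summable.of_norm_bounded (summable_aux hm0 hm1)
    (fun s => (hbd s z le_rfl le_rfl).2.2.2)

lemma factor_lt_one (hp0 : p ≠ 0) (hp1 : ‖p‖ < 1) {z : ℂ}
    (hz1 : ‖p‖ < ‖z‖) (hz2 : ‖z‖ < ‖p‖⁻¹) (s : ℕ) :
    ‖p ^ (s + 1) * z‖ < 1 ∧ ‖p ^ (s + 1) * z⁻¹‖ < 1 ∧ ‖p ^ (s + 1)‖ < 1 := by
  have hpn : (0:ℝ) < ‖p‖ := norm_pos_iff.mpr hp0
  have hps : ‖p‖ ^ s ≤ 1 := pow_le_one₀ (norm_nonneg p) hp1.le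
  have hz0 : (0:ℝ) < ‖z‖ := lt_trans hpn hz1
  refine ⟨?_, ?_, ?_⟩
  · rw [norm_mul, norm_pow]
    calc ‖p‖ ^ (s + 1) * ‖z‖ < ‖p‖ ^ (s + 1) * ‖p‖⁻¹ := by
          exact mul_lt_mul_of_pos_left hz2 (by positivity)
      _ = ‖p‖ ^ s := by
          rw [pow_succ, mul_assoc, mul_inv_cancel₀ (ne_of_gt hpn), mul_one]
      _ ≤ 1 := hps
  · rw [norm_mul, norm_pow, norm_inv]
    have : ‖z‖⁻¹ < ‖p‖⁻¹ := by
      exact inv_strictAnti₀ hpn hz1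
    calc ‖p‖ ^ (s + 1) * ‖z‖⁻¹ < ‖p‖ ^ (s + 1) * ‖p‖⁻¹ := by
          exact mul_lt_mul_of_pos_left this (by positivity)
      _ = ‖p‖ ^ s := by rw [pow_succ, mul_assoc, mul_inv_cancel₀ (ne_of_gt hpn), mul_one]
      _ ≤ 1 := hps
  · rw [norm_pow]
    exact pow_lt_one₀ (norm_nonneg p) hp1 (Nat.succ_ne_zero s)

lemma hasProd_theta (hp0 : p ≠ 0) (hp1 : ‖p‖ < 1) {z : ℂ}
    (hz1 : ‖p‖ < ‖z‖) (hz2 : ‖z‖ < ‖p‖⁻¹) :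
    HasProd (fun s : ℕ =>
        (1 - p ^ (s + 1) * z) * (1 - p ^ (s + 1) * z⁻¹) / (1 - p ^ (s + 1)) ^ 2)
      (Complex.exp (lsum p z)) := by
  have hsum : HasSum (fun s => lterm p s z) (lsum p z) :=
    (lsum_summable hp0 hp1 hz1 hz2).hasSum
  have h2 : Filter.Tendsto (fun t : Finset ℕ => Complex.exp (∑ s ∈ t, lterm p s z))
      Filter.atTop (nhds (Complex.exp (lsum p z))) :=
    (Complex.continuous_exp.tendsto _).comp hsum
  refine Filter.Tendsto.congr (fun t => ?_) h2
  rw [Complex.exp_sum]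
  refine Finset.prod_congr rfl (fun s _ => ?_)
  obtain ⟨f1, f2, f3⟩ := factor_lt_one hp0 hp1 hz1 hz2 s
  have n1 := one_sub_ne_zero f1
  have n2 := one_sub_ne_zero f2
  have n3 := one_sub_ne_zero f3
  rw [lterm]
  rw [sub_eq_add_neg, Complex.exp_add, Complex.exp_add, Complex.exp_neg,
    two_mul, Complex.exp_add, Complex.exp_log n1, Complex.exp_log n2, Complex.exp_log n3]
  simp only [sq, div_eq_mul_inv]

lemma jTheta_eq_on (hp0 : p ≠ 0) (hp1 : ‖p‖ < 1) {z : ℂ}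
    (hz1 : ‖p‖ < ‖z‖) (hz2 : ‖z‖ < ‖p‖⁻¹) :
    jTheta p z = (1 - z) * Complex.exp (lsum p z) := by
  rw [jTheta, (hasProd_theta hp0 hp1 hz1 hz2).tprod_eq]

lemma lsum_differentiableAt (hp0 : p ≠ 0) (hp1 : ‖p‖ < 1) {z : ℂ}
    (hz1 : ‖p‖ < ‖z‖) (hz2 : ‖z‖ < ‖p‖⁻¹) :
    DifferentiableAt ℂ (lsum p) z := by
  have hpn : (0:ℝ) < ‖p‖ := norm_pos_iff.mpr hp0
  set a := (‖p‖ + ‖z‖) / 2 with ha_def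
  set b := (‖z‖ + ‖p‖⁻¹) / 2 with hb_def
  have ha : ‖p‖ < a := by rw [ha_def]; linarith
  have haz : a < ‖z‖ := by rw [ha_def]; linarith
  have hzb : ‖z‖ < b := by rw [hb_def]; linarith
  have hb : b < ‖p‖⁻¹ := by rw [hb_def]; linarith
  have ha0 : (0:ℝ) < a := lt_of_le_of_lt (norm_nonneg p) ha
  obtain ⟨m, hm0, hm1, hbd⟩ := lterm_bound_on hp0 hp1 ha hb
  set V : Set ℂ := {w | a < ‖w‖ ∧ ‖w‖ < b} with hV_def
  have hV : IsOpen V := by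
    apply IsOpen.inter
    · exact isOpen_lt continuous_const continuous_norm
    · exact isOpen_lt continuous_norm continuous_const
  have hdiff : DifferentiableOn ℂ (lsum p) V := by
    apply differentiableOn_tsum_of_summable_norm (summable_aux hm0 hm1)
      _ hV (fun s w hw => (hbd s w hw.1.le hw.2.le).2.2.2)
    intro s
    intro w hw
    obtain ⟨k1, k2, k3, _⟩ := hbd s w hw.1.le hw.2.le
    have hms : m ^ (s + 1) ≤ m := pow_le_of_le_one hm0 hm1.le (Nat.succ_ne_zero s)
    have s1 : (1 : ℂ) - p ^ (s + 1) * w ∈ Complex.slitPlane :=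
      one_sub_mem_slitPlane (lt_of_le_of_lt (k1.trans hms) hm1)
    have s2 : (1 : ℂ) - p ^ (s + 1) * w⁻¹ ∈ Complex.slitPlane :=
      one_sub_mem_slitPlane (lt_of_le_of_lt (k2.trans hms) hm1)
    have hw0 : w ≠ 0 := by
      intro h
      rw [h] at hw
      simp only [hV_def, Set.mem_setOf_eq, norm_zero] at hw
      linarith [hw.1]
    apply DifferentiableAt.differentiableWithinAt
    apply DifferentiableAt.sub
    apply DifferentiableAt.add
    · exact ((differentiableAt_const _).sub
        ((differentiableAt_const _).mul differentiableAt_id)).clog s1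
    · exact ((differentiableAt_const _).sub
        ((differentiableAt_const _).mul (differentiableAt_inv hw0))).clog s2
    · exact differentiableAt_const _
  exact hdiff.differentiableAt (hV.mem_nhds ⟨haz, hzb⟩)

lemma jTheta_differentiableOn (hp0 : p ≠ 0) (hp1 : ‖p‖ < 1) :
    DifferentiableOn ℂ (fun w => (1 - w) * Complex.exp (lsum p w))
      {w : ℂ | ‖p‖ < ‖w‖ ∧ ‖w‖ < ‖p‖⁻¹} := by
  intro w hw
  apply DifferentiableAt.differentiableWithinAt
  exact ((differentiableAt_const _).sub differentiableAt_id).mul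
    (lsum_differentiableAt hp0 hp1 hw.1 hw.2).cexp

lemma annulus_isOpen : IsOpen {w : ℂ | ‖p‖ < ‖w‖ ∧ ‖w‖ < ‖p‖⁻¹} :=
  IsOpen.inter (isOpen_lt continuous_const continuous_norm)
    (isOpen_lt continuous_norm continuous_const)

lemma jTheta_eventuallyEq (hp0 : p ≠ 0) (hp1 : ‖p‖ < 1) {z : ℂ}
    (hz1 : ‖p‖ < ‖z‖) (hz2 : ‖z‖ < ‖p‖⁻¹) :
    (fun w => (1 - w) * Complex.exp (lsum p w)) =ᶠ[nhds z] jTheta p := by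
  refine Filter.eventuallyEq_of_mem (annulus_isOpen.mem_nhds ⟨hz1, hz2⟩) (fun w hw => ?_)
  exact (jTheta_eq_on hp0 hp1 hw.1 hw.2).symm

lemma jTheta_analyticAt (hp0 : p ≠ 0) (hp1 : ‖p‖ < 1) {z : ℂ}
    (hz1 : ‖p‖ < ‖z‖) (hz2 : ‖z‖ < ‖p‖⁻¹) :
    AnalyticAt ℂ (jTheta p) z := by
  have h := (jTheta_differentiableOn hp0 hp1).analyticOnNhd annulus_isOpen z ⟨hz1, hz2⟩
  exact h.congr (jTheta_eventuallyEq hp0 hp1 hz1 hz2)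

lemma jTheta_ne_zero (hp0 : p ≠ 0) (hp1 : ‖p‖ < 1) {z : ℂ}
    (hz1 : ‖p‖ < ‖z‖) (hz2 : ‖z‖ < ‖p‖⁻¹) (hz3 : z ≠ 1) :
    jTheta p z ≠ 0 := by
  rw [jTheta_eq_on hp0 hp1 hz1 hz2]
  exact mul_ne_zero (sub_ne_zero.mpr (Ne.symm hz3)) (Complex.exp_ne_zero _)

lemma jTheta_one : jTheta p 1 = 0 := by simp [jTheta]

lemma one_mem_annulus (hp0 : p ≠ 0) (hp1 : ‖p‖ < 1) : ‖p‖ < ‖(1:ℂ)‖ ∧ ‖(1:ℂ)‖ < ‖p‖⁻¹ := by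
  constructor
  · simpa using hp1
  · rw [norm_one]
    have hpn : (0:ℝ) < ‖p‖ := norm_pos_iff.mpr hp0
    have := inv_strictAnti₀ hpn hp1
    simpa using this

lemma exp_lsum_one (hp0 : p ≠ 0) (hp1 : ‖p‖ < 1) : Complex.exp (lsum p 1) = 1 := by
  obtain ⟨h1, h2⟩ := one_mem_annulus hp0 hp1
  have h := hasProd_theta hp0 hp1 h1 h2
  have heq : (fun s : ℕ =>
      (1 - p ^ (s + 1) * 1) * (1 - p ^ (s + 1) * (1:ℂ)⁻¹) / (1 - p ^ (s + 1)) ^ 2)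
      = fun _ : ℕ => (1 : ℂ) := by
    funext s
    obtain ⟨_, _, f3⟩ := factor_lt_one hp0 hp1 h1 h2 s
    have n3 := one_sub_ne_zero f3
    rw [inv_one, mul_one]
    rw [sq]
    rw [div_eq_one_iff_eq (by exact mul_ne_zero n3 n3)]
  rw [heq] at h
  exact h.unique hasProd_one

lemma jTheta_hasDerivAt_one (hp0 : p ≠ 0) (hp1 : ‖p‖ < 1) :
    HasDerivAt (jTheta p) (-1) 1 := by
  obtain ⟨h1, h2⟩ := one_mem_annulus hp0 hp1
  have hl : DifferentiableAt ℂ (lsum p) 1 := lsum_differentiableAt hp0 hp1 h1 h2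
  have he : HasDerivAt (fun w => Complex.exp (lsum p w))
      (Complex.exp (lsum p 1) * deriv (lsum p) 1) 1 := hl.hasDerivAt.cexp
  have hone : HasDerivAt (fun w : ℂ => 1 - w) (-1) 1 := by
    simpa using (hasDerivAt_id (1:ℂ)).const_sub 1
  have hmul := hone.mul he
  have hval : (-1) * Complex.exp (lsum p 1) + (1 - 1) * (Complex.exp (lsum p 1) * deriv (lsum p) 1)
      = (-1 : ℂ) := by
    rw [exp_lsum_one hp0 hp1]; ring
  rw [hval] at hmul
  exact hmul.congr_of_eventuallyEq ((jTheta_eventuallyEq hp0 hp1 h1 h2).symm)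

lemma analyticAt_dslope_self {f : ℂ → ℂ} {a : ℂ} (hf : AnalyticAt ℂ f a) :
    AnalyticAt ℂ (dslope f a) a := by
  obtain ⟨q, hq⟩ := hf
  exact ⟨q.fslope, hq.has_fpower_series_dslope_fslope⟩

lemma analyticAt_dslope_of_ne {f : ℂ → ℂ} {a z : ℂ} (hz : z ≠ a) (hf : AnalyticAt ℂ f z) :
    AnalyticAt ℂ (dslope f a) z := by
  have h1 : AnalyticAt ℂ (fun w => (w - a)⁻¹ * (f w - f a)) z := by
    apply AnalyticAt.mul
    · exact (analyticAt_id.sub analyticAt_const).inv (sub_ne_zero.mpr hz)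
    · exact hf.sub analyticAt_const
  refine h1.congr ?_
  have hop : IsOpen {w : ℂ | w ≠ a} := isOpen_ne
  filter_upwards [hop.mem_nhds hz] with w hw
  rw [dslope_of_ne _ hw, slope_def_field]
  rw [div_eq_inv_mul]

lemma partial_fraction {r : ℕ} (hr : 0 < r) (L : Fin r → ℂ) (hinj : Function.Injective L)
    {z : ℂ} (hz : ∀ i, z ≠ L i) :
    (∏ i, (z - L i))⁻¹ = ∑ i, ((∏ j ∈ univ.erase i, (L i - L j))⁻¹ * (z - L i)⁻¹) := by
  classical
  have : Nonempty (Fin r) := ⟨⟨0, hr⟩⟩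
  have hPne : ∀ i, z - L i ≠ 0 := fun i => sub_ne_zero.mpr (hz i)
  have hP : (∏ i, (z - L i)) ≠ 0 := Finset.prod_ne_zero_iff.mpr (fun i _ => hPne i)
  have hb := Lagrange.sum_basis (Function.Injective.injOn hinj) (Finset.univ_nonempty (α := Fin r))
  have h1 := congrArg (Polynomial.eval z) hb
  rw [Polynomial.eval_finset_sum, Polynomial.eval_one] at h1
  have h2 : ∀ i : Fin r, Polynomial.eval z (Lagrange.basis univ L i)
      = (∏ j ∈ univ.erase i, (L i - L j)⁻¹) * ∏ j ∈ univ.erase i, (z - L j) := by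
    intro i
    rw [Lagrange.basis, Polynomial.eval_prod, ← Finset.prod_mul_distrib]
    refine Finset.prod_congr rfl (fun j _ => ?_)
    rw [Lagrange.basisDivisor]
    simp
  rw [Finset.sum_congr rfl (fun i _ => h2 i)] at h1
  have key : ∀ i : Fin r, (z - L i)⁻¹
      = (∏ j ∈ univ.erase i, (z - L j)) * (∏ i, (z - L i))⁻¹ := by
    intro i
    have hQ : (∏ j ∈ univ.erase i, (z - L j)) ≠ 0 :=
      Finset.prod_ne_zero_iff.mpr (fun j _ => hPne j)
    rw [← Finset.mul_prod_erase univ _ (Finset.mem_univ i), mul_inv, ← mul_assoc,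
      mul_comm (∏ j ∈ univ.erase i, (z - L j)) ((z - L i)⁻¹), mul_assoc,
      mul_inv_cancel₀ hQ, mul_one]
  calc (∏ i, (z - L i))⁻¹
      = (∑ i, (∏ j ∈ univ.erase i, (L i - L j)⁻¹) * ∏ j ∈ univ.erase i, (z - L j))
        * (∏ i, (z - L i))⁻¹ := by rw [h1, one_mul]
    _ = ∑ i, ((∏ j ∈ univ.erase i, (L i - L j))⁻¹ * (z - L i)⁻¹) := by
        rw [Finset.sum_mul]
        refine Finset.sum_congr rfl (fun i _ => ?_)
        rw [key i, Finset.prod_inv_distrib]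
        ring

lemma circleIntegral_finset_sum {ι : Type*} (t : Finset ι) (f : ι → ℂ → ℂ) {c : ℂ} {R : ℝ}
    (h : ∀ i ∈ t, CircleIntegrable (f i) c R) :
    (∮ z in C(c, R), ∑ i ∈ t, f i z) = ∑ i ∈ t, ∮ z in C(c, R), f i z := by
  rw [show (∮ z in C(c, R), ∑ i ∈ t, f i z)
      = ∫ θ in (0 : ℝ)..2 * Real.pi, ∑ i ∈ t,
        deriv (circleMap c R) θ • f i (circleMap c R θ) from by
    simp only [circleIntegral, Finset.smul_sum]]
  rw [intervalIntegral.integral_finset_sum (fun i hi => (h i hi).out)]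
  rfl

lemma circleIntegral_add {f g : ℂ → ℂ} {c : ℂ} {R : ℝ} (hf : CircleIntegrable f c R)
    (hg : CircleIntegrable g c R) :
    (∮ z in C(c, R), (f z + g z)) = (∮ z in C(c, R), f z) + ∮ z in C(c, R), g z := by
  simp only [circleIntegral, smul_add]
  exact intervalIntegral.integral_add hf.out hg.out

lemma circleIntegrable_sum {ι : Type*} (t : Finset ι) (f : ι → ℂ → ℂ) {c : ℂ} {R : ℝ}
    (h : ∀ i ∈ t, CircleIntegrable (f i) c R) :
    CircleIntegrable (fun z => ∑ i ∈ t, f i z) c R := by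
  have h2 := IntervalIntegrable.sum t (f := fun i θ => f i (circleMap c R θ)) h
  rw [show (∑ i ∈ t, fun θ => f i (circleMap c R θ)) = fun θ => ∑ i ∈ t, f i (circleMap c R θ)
    from by funext θ; simp [Finset.sum_apply]] at h2
  exact h2

theorem aux (p : ℂ) (hp0 : p ≠ 0) (hp1 : ‖p‖ < 1)
    (σ : ℂ → ℂ) (U : Set ℂ) (hU : IsOpen U)
    (hUsub : {z : ℂ | ‖p‖ ≤ ‖z‖ ∧ ‖z‖ ≤ 1} ⊆ U)
    (hσ : AnalyticOnNhd ℂ σ U)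
    (r : ℕ) (hr : 0 < r) (L : Fin r → ℂ) (hLinj : Function.Injective L)
    (hL : ∀ i, ‖p‖ < ‖L i‖ ∧ ‖L i‖ < 1) :
    (2 * Real.pi * Complex.I)⁻¹ *
      ((∮ z in C(0, (1 : ℝ)), σ z / (z * ∏ i, jTheta p (L i / z))) -
        ∮ z in C(0, ‖p‖), σ z / (z * ∏ i, jTheta p (L i / z))) =
      ∑ i, σ (L i) / ∏ j ∈ univ.erase i, jTheta p (L j / L i) := by
  classical
  have hq0 : (0:ℝ) < ‖p‖ := norm_pos_iff.mpr hp0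
  have hLpos : ∀ i, (0:ℝ) < ‖L i‖ := fun i => lt_trans hq0 (hL i).1
  have hLne0 : ∀ i, L i ≠ 0 := fun i => norm_pos_iff.mp (hLpos i)
  have hLL : ∀ i j : Fin r, j ≠ i → L i - L j ≠ 0 :=
    fun i j hji => sub_ne_zero.mpr (fun h => hji (hLinj h).symm)
  -- the open set W
  set W : Set ℂ := U ∩ ({(0:ℂ)}ᶜ ∩ ⋂ i : Fin r,
      ({z : ℂ | ‖p‖ * ‖z‖ < ‖L i‖} ∩ {z : ℂ | ‖p‖ * ‖L i‖ < ‖z‖})) with hW_def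
  have hWopen : IsOpen W := by
    refine hU.inter (IsOpen.inter isOpen_compl_singleton
      (isOpen_iInter_of_finite (fun i => IsOpen.inter ?_ ?_)))
    · exact isOpen_lt (continuous_const.mul continuous_norm) continuous_const
    · exact isOpen_lt continuous_const continuous_norm
  have hmemW : ∀ z : ℂ, ‖p‖ ≤ ‖z‖ → ‖z‖ ≤ 1 → z ∈ W := by
    intro z h1 h2
    refine ⟨hUsub ⟨h1, h2⟩, ?_, ?_⟩
    · simp only [Set.mem_compl_iff, Set.mem_singleton_iff]
      intro h0
      rw [h0, norm_zero] at h1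
      linarith
    · rw [Set.mem_iInter]
      intro i
      constructor
      · show ‖p‖ * ‖z‖ < ‖L i‖
        calc ‖p‖ * ‖z‖ ≤ ‖p‖ * 1 := mul_le_mul_of_nonneg_left h2 hq0.le
          _ = ‖p‖ := mul_one _
          _ < ‖L i‖ := (hL i).1
      · show ‖p‖ * ‖L i‖ < ‖z‖
        calc ‖p‖ * ‖L i‖ < ‖p‖ * 1 := mul_lt_mul_of_pos_left (hL i).2 hq0
          _ = ‖p‖ := mul_one _
          _ ≤ ‖z‖ := h1
  have hWz : ∀ z ∈ W, z ≠ 0 ∧ ∀ i : Fin r, ‖p‖ < ‖L i / z‖ ∧ ‖L i / z‖ < ‖p‖⁻¹ := by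
    intro z hz
    obtain ⟨hzU, hz0', hzi⟩ := hz
    rw [Set.mem_iInter] at hzi
    have hz0 : z ≠ 0 := hz0'
    have hzn : (0:ℝ) < ‖z‖ := norm_pos_iff.mpr hz0
    refine ⟨hz0, fun i => ?_⟩
    obtain ⟨hi1, hi2⟩ := hzi i
    constructor
    · rw [norm_div, lt_div_iff₀ hzn]
      exact hi1
    · rw [norm_div, div_lt_iff₀ hzn, inv_mul_eq_div, lt_div_iff₀ hq0, mul_comm]
      exact hi2
  -- analyticity of theta factors
  have hθan : ∀ (i : Fin r), ∀ z ∈ W, AnalyticAt ℂ (fun w => jTheta p (L i / w)) z := by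
    intro i z hz
    obtain ⟨hz0, hall⟩ := hWz z hz
    exact (jTheta_analyticAt hp0 hp1 (hall i).1 (hall i).2).comp
      (analyticAt_const.div analyticAt_id hz0)
  have hθzero : ∀ i : Fin r, jTheta p (L i / L i) = 0 := by
    intro i
    rw [div_self (hLne0 i)]
    exact jTheta_one
  have hθne : ∀ (i : Fin r), ∀ z ∈ W, z ≠ L i → jTheta p (L i / z) ≠ 0 := by
    intro i z hz hzi
    obtain ⟨hz0, hall⟩ := hWz z hz
    apply jTheta_ne_zero hp0 hp1 (hall i).1 (hall i).2
    intro h1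
    apply hzi
    rw [div_eq_one_iff_eq hz0] at h1
    exact h1.symm
  have hθderiv : ∀ i : Fin r, HasDerivAt (fun w => jTheta p (L i / w)) (L i)⁻¹ (L i) := by
    intro i
    have hinner : HasDerivAt (fun w : ℂ => L i / w) (L i * -(((L i) ^ 2)⁻¹)) (L i) := by
      simpa [div_eq_mul_inv] using (hasDerivAt_inv (hLne0 i)).const_mul (L i)
    have houter : HasDerivAt (jTheta p) (-1) (L i / L i) := by
      rw [div_self (hLne0 i)]
      exact jTheta_hasDerivAt_one hp0 hp1
    have hcomp := houter.comp (L i) hinner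
    have heq : (-1 : ℂ) * (L i * -(((L i) ^ 2)⁻¹)) = (L i)⁻¹ := by
      have h1 : (-1 : ℂ) * (L i * -(((L i) ^ 2)⁻¹)) = L i * ((L i) ^ 2)⁻¹ := by ring
      rw [h1, sq, mul_inv, ← mul_assoc, mul_inv_cancel₀ (hLne0 i), one_mul]
    rw [heq] at hcomp
    exact hcomp
  -- the function E
  set E : ℂ → ℂ := fun z => z * ∏ i, dslope (fun w => jTheta p (L i / w)) (L i) z with hE_def
  have hEan : ∀ z ∈ W, AnalyticAt ℂ E z := by
    intro z hz
    apply AnalyticAt.mul analyticAt_id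
    apply Finset.analyticAt_fun_prod
    intro i _
    by_cases h : z = L i
    · rw [h]
      exact analyticAt_dslope_self (hθan i (L i) (hmemW (L i) (hL i).1.le (hL i).2.le))
    · exact analyticAt_dslope_of_ne h (hθan i z hz)
  have hdsl_ne : ∀ (i : Fin r) (z : ℂ), z ≠ L i →
      dslope (fun w => jTheta p (L i / w)) (L i) z = (z - L i)⁻¹ * jTheta p (L i / z) := by
    intro i z hne
    rw [dslope_of_ne _ hne, slope_def_field, hθzero i, sub_zero, div_eq_inv_mul]
  have hdsl_self : ∀ i : Fin r,
      dslope (fun w => jTheta p (L i / w)) (L i) (L i) = (L i)⁻¹ := by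
    intro i
    rw [dslope_same]
    exact (hθderiv i).deriv
  have hEne : ∀ z : ℂ, ‖p‖ ≤ ‖z‖ → ‖z‖ ≤ 1 → E z ≠ 0 := by
    intro z h1 h2
    have hz := hmemW z h1 h2
    have hz0 : z ≠ 0 := (hWz z hz).1
    apply mul_ne_zero hz0
    rw [Finset.prod_ne_zero_iff]
    intro i _
    by_cases h : z = L i
    · rw [h, hdsl_self i]
      exact inv_ne_zero (hLne0 i)
    · rw [hdsl_ne i z h]
      exact mul_ne_zero (inv_ne_zero (sub_ne_zero.mpr h)) (hθne i z hz h)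
  have hEfact : ∀ z : ℂ, (∀ i, z ≠ L i) →
      z * ∏ i, jTheta p (L i / z) = (∏ i, (z - L i)) * E z := by
    intro z hne
    rw [hE_def]
    simp only []
    rw [← mul_assoc, mul_comm (∏ i, (z - L i)) z, mul_assoc, ← Finset.prod_mul_distrib]
    congr 1
    refine Finset.prod_congr rfl (fun i _ => ?_)
    rw [hdsl_ne i z (hne i), ← mul_assoc, mul_inv_cancel₀ (sub_ne_zero.mpr (hne i)), one_mul]
  -- the open set W' and τ
  have hEcont : ContinuousOn E W := fun z hz => (hEan z hz).continuousAt.continuousWithinAt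
  set W' : Set ℂ := W ∩ E ⁻¹' {(0:ℂ)}ᶜ with hW'_def
  have hW'open : IsOpen W' := hEcont.isOpen_inter_preimage hWopen isOpen_compl_singleton
  have hmemW' : ∀ z : ℂ, ‖p‖ ≤ ‖z‖ → ‖z‖ ≤ 1 → z ∈ W' :=
    fun z h1 h2 => ⟨hmemW z h1 h2, hEne z h1 h2⟩
  have hW'sub : W' ⊆ W := Set.inter_subset_left
  have hEne' : ∀ z ∈ W', E z ≠ 0 := fun z hz => hz.2
  set τ : ℂ → ℂ := fun z => σ z / E z with hτ_def
  have hτan : ∀ z ∈ W', AnalyticAt ℂ τ z :=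
    fun z hz => (hσ z hz.1.1).div (hEan z hz.1) (hEne' z hz)
  have hLW' : ∀ i : Fin r, L i ∈ W' := fun i => hmemW' (L i) (hL i).1.le (hL i).2.le
  -- H and the coefficients
  set H : ℂ → ℂ :=
    fun z => ∑ i, (∏ j ∈ univ.erase i, (L i - L j))⁻¹ * dslope τ (L i) z with hH_def
  have hHan : ∀ z ∈ W', AnalyticAt ℂ H z := by
    intro z hz
    apply Finset.analyticAt_fun_sum
    intro i _
    apply AnalyticAt.mul analyticAt_const
    by_cases h : z = L i
    · rw [h]
      exact analyticAt_dslope_self (hτan (L i) (hLW' i))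
    · exact analyticAt_dslope_of_ne h (hτan z hz)
  set c : Fin r → ℂ := fun i => τ (L i) * (∏ j ∈ univ.erase i, (L i - L j))⁻¹ with hc_def
  have hw_ne : ∀ i : Fin r, (∏ j ∈ univ.erase i, (L i - L j)) ≠ 0 := by
    intro i
    rw [Finset.prod_ne_zero_iff]
    intro j hj
    exact hLL i j (Finset.mem_erase.mp hj).1
  -- key pointwise identity off the poles
  have hkey : ∀ z ∈ W', (∀ i, z ≠ L i) →
      σ z / (z * ∏ i, jTheta p (L i / z))
        = H z + ∑ i, c i * (z - L i)⁻¹ := by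
    intro z hz hne
    have hPne : (∏ i, (z - L i)) ≠ 0 :=
      Finset.prod_ne_zero_iff.mpr (fun i _ => sub_ne_zero.mpr (hne i))
    rw [hEfact z hne]
    rw [div_mul_eq_div_div_swap]
    rw [show σ z / E z = τ z from rfl, div_eq_mul_inv]
    rw [partial_fraction hr L hLinj hne, Finset.mul_sum]
    rw [hH_def, hc_def]
    simp only []
    rw [← Finset.sum_add_distrib]
    refine Finset.sum_congr rfl (fun i _ => ?_)
    rw [dslope_of_ne _ (hne i), slope_def_field]
    have h1 : z - L i ≠ 0 := sub_ne_zero.mpr (hne i)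
    field_simp
    ring
  -- spheres are inside W' and off the poles
  have hsub1 : ∀ z ∈ sphere (0:ℂ) (1:ℝ), z ∈ W' ∧ ∀ i : Fin r, z ≠ L i := by
    intro z hz
    rw [mem_sphere_iff_norm, sub_zero] at hz
    refine ⟨hmemW' z (by rw [hz]; exact hp1.le) hz.le, fun i h => ?_⟩
    rw [h] at hz
    exact absurd hz (ne_of_lt (hL i).2)
  have hsub2 : ∀ z ∈ sphere (0:ℂ) ‖p‖, z ∈ W' ∧ ∀ i : Fin r, z ≠ L i := by
    intro z hz
    rw [mem_sphere_iff_norm, sub_zero] at hz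
    refine ⟨hmemW' z hz.ge (by rw [hz]; exact hp1.le), fun i h => ?_⟩
    rw [h] at hz
    exact absurd hz (ne_of_gt (hL i).1)
  -- continuity and integrability
  have hHcont : ContinuousOn H W' := fun z hz => (hHan z hz).continuousAt.continuousWithinAt
  have hGint : ∀ (R : ℝ), 0 ≤ R → (∀ z ∈ sphere (0:ℂ) R, ∀ i : Fin r, z ≠ L i) →
      ∀ i : Fin r, CircleIntegrable (fun z => c i * (z - L i)⁻¹) 0 R := by
    intro R hR hs i
    apply ContinuousOn.circleIntegrable hR
    apply ContinuousOn.mul continuousOn_const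
    apply ContinuousOn.inv₀
    · exact continuousOn_id.sub continuousOn_const
    · exact fun z hz => sub_ne_zero.mpr (hs z hz i)
  have hint1H : CircleIntegrable H 0 1 :=
    (hHcont.mono (fun z hz => (hsub1 z hz).1)).circleIntegrable zero_le_one
  have hint2H : CircleIntegrable H 0 ‖p‖ :=
    (hHcont.mono (fun z hz => (hsub2 z hz).1)).circleIntegrable hq0.le
  have hint1G := hGint 1 zero_le_one (fun z hz => (hsub1 z hz).2)
  have hint2G := hGint ‖p‖ hq0.le (fun z hz => (hsub2 z hz).2)
  -- rewrite the two integrals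
  have hcongr1 : (∮ z in C(0, (1:ℝ)), σ z / (z * ∏ i, jTheta p (L i / z)))
      = ∮ z in C(0, (1:ℝ)), (H z + ∑ i, c i * (z - L i)⁻¹) := by
    apply circleIntegral.integral_congr zero_le_one
    intro z hz
    exact hkey z (hsub1 z hz).1 (hsub1 z hz).2
  have hcongr2 : (∮ z in C(0, ‖p‖), σ z / (z * ∏ i, jTheta p (L i / z)))
      = ∮ z in C(0, ‖p‖), (H z + ∑ i, c i * (z - L i)⁻¹) := by
    apply circleIntegral.integral_congr hq0.le
    intro z hz
    exact hkey z (hsub2 z hz).1 (hsub2 z hz).2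
  have hsplit : ∀ R : ℝ, CircleIntegrable H 0 R →
      (∀ i : Fin r, CircleIntegrable (fun z => c i * (z - L i)⁻¹) 0 R) →
      (∮ z in C(0, R), (H z + ∑ i, c i * (z - L i)⁻¹))
        = (∮ z in C(0, R), H z) + ∑ i, (c i * ∮ z in C(0, R), (z - L i)⁻¹) := by
    intro R hH hG
    rw [circleIntegral_add hH (circleIntegrable_sum univ _ (fun i _ => hG i))]
    congr 1
    rw [circleIntegral_finset_sum univ (fun i z => c i * (z - L i)⁻¹) (fun i _ => hG i)]
    exact Finset.sum_congr rfl (fun i _ => circleIntegral.integral_const_mul _ _ _ _)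
  -- residue integrals
  have hres1 : ∀ i : Fin r, (∮ z in C(0, (1:ℝ)), (z - L i)⁻¹) = 2 * Real.pi * Complex.I := by
    intro i
    apply circleIntegral.integral_sub_inv_of_mem_ball
    rw [mem_ball, dist_zero_right]
    exact (hL i).2
  have hres2 : ∀ i : Fin r, (∮ z in C(0, ‖p‖), (z - L i)⁻¹) = 0 := by
    intro i
    have hzne : ∀ z ∈ closedBall (0:ℂ) ‖p‖, z - L i ≠ 0 := by
      intro z hz
      rw [mem_closedBall, dist_zero_right] at hz
      apply sub_ne_zero.mpr
      intro h
      rw [h] at hz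
      exact absurd hz (not_le.mpr (hL i).1)
    apply Complex.circleIntegral_eq_zero_of_differentiable_on_off_countable hq0.le
      Set.countable_empty
    · apply ContinuousOn.inv₀ (continuousOn_id.sub continuousOn_const) hzne
    · intro z hz
      exact ((differentiableAt_id.sub (differentiableAt_const _)).inv
        (hzne z (ball_subset_closedBall hz.1)))
  -- the annulus theorem for H
  have hHeq : (∮ z in C(0, (1:ℝ)), H z) = ∮ z in C(0, ‖p‖), H z := by
    apply circleIntegral_eq_of_differentiable_on_annulus_off_countable hq0 hp1.le
      Set.countable_empty
    · apply hHcont.mono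
      intro z hz
      obtain ⟨h1, h2⟩ := hz
      rw [mem_closedBall, dist_zero_right] at h1
      rw [mem_ball, dist_zero_right, not_lt] at h2
      exact hmemW' z h2 h1
    · intro z hz
      obtain ⟨⟨h1, h2⟩, _⟩ := hz
      rw [mem_ball, dist_zero_right] at h1
      rw [mem_closedBall, dist_zero_right, not_le] at h2
      exact (hHan z (hmemW' z h2.le h1.le)).differentiableAt
  -- value of the coefficients
  have hθprod_ne : ∀ i : Fin r, (∏ j ∈ univ.erase i, jTheta p (L j / L i)) ≠ 0 := by
    intro i
    rw [Finset.prod_ne_zero_iff]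
    intro j hj
    exact hθne j (L i) (hW'sub (hLW' i)) (fun h => (Finset.mem_erase.mp hj).1 (hLinj h).symm)
  have hELi : ∀ i : Fin r,
      E (L i) = L i * ((L i)⁻¹ * ∏ j ∈ univ.erase i,
        ((L i - L j)⁻¹ * jTheta p (L j / L i))) := by
    intro i
    rw [hE_def]
    simp only []
    congr 1
    rw [← Finset.mul_prod_erase univ _ (Finset.mem_univ i), hdsl_self i]
    congr 1
    refine Finset.prod_congr rfl (fun j hj => ?_)
    exact hdsl_ne j (L i) (fun h => (Finset.mem_erase.mp hj).1 (hLinj h).symm)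
  have hci : ∀ i : Fin r, c i = σ (L i) / ∏ j ∈ univ.erase i, jTheta p (L j / L i) := by
    intro i
    rw [hc_def]
    simp only []
    rw [hτ_def]
    simp only []
    rw [hELi i, Finset.prod_mul_distrib, ← Finset.prod_inv_distrib]
    have hA := hw_ne i
    have hB := hθprod_ne i
    have hLi := hLne0 i
    field_simp
    ring
    rw [mul_assoc, mul_inv_cancel₀ (Finset.prod_ne_zero_iff.mpr fun j hj => inv_ne_zero (hLL i j (Finset.mem_erase.mp hj).1)), mul_one]
  rw [hcongr1, hcongr2, hsplit 1 hint1H hint1G, hsplit ‖p‖ hint2H hint2G, hHeq]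
  have hz1 : ∑ i : Fin r, (c i * ∮ z in C(0, (1:ℝ)), (z - L i)⁻¹)
      = (∑ i, c i) * (2 * Real.pi * Complex.I) := by
    rw [Finset.sum_mul]
    exact Finset.sum_congr rfl (fun i _ => by rw [hres1 i])
  have hz2 : ∑ i : Fin r, (c i * ∮ z in C(0, ‖p‖), (z - L i)⁻¹) = 0 := by
    apply Finset.sum_eq_zero
    intro i _
    rw [hres2 i, mul_zero]
  rw [hz1, hz2, add_zero]
  rw [show (∮ z in C(0, ‖p‖), H z) + (∑ i, c i) * (2 * Real.pi * Complex.I)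
      - (∮ z in C(0, ‖p‖), H z) = (∑ i, c i) * (2 * Real.pi * Complex.I) from by ring]
  rw [mul_comm (∑ i, c i) _, ← mul_assoc, inv_mul_cancel₀ Complex.two_pi_I_ne_zero, one_mul]
  exact Finset.sum_congr rfl (fun i _ => hci i)

end EllipticAux

/-- The residue computation underlying the elliptic push-forward formula along a
projective bundle: for `σ` analytic on a neighborhood of the closed annulus
`|p| ≤ |z| ≤ 1` and pairwise distinct `L₁, …, L_r` with `|p| < |L_i| < 1`,
`(2πi)⁻¹ (∮_{|z|=1} − ∮_{|z|=|p|}) σ(z)/(z ∏_i ϑ(L_i/z)) dz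
  = Σ_i σ(L_i)/∏_{j≠i} ϑ(L_j/L_i)`. -/
theorem elliptic_pushforward_residue (p : ℂ)
    (hp0 : 0 < ‖p‖) (hp1 : ‖p‖ < 1)
    (σ : ℂ → ℂ) (U : Set ℂ) (hU : IsOpen U)
    (hUsub : {z : ℂ | ‖p‖ ≤ ‖z‖ ∧ ‖z‖ ≤ 1} ⊆ U)
    (hσ : AnalyticOnNhd ℂ σ U)
    (r : ℕ) (L : Fin r → ℂ) (hLinj : Function.Injective L)
    (hL : ∀ i, ‖p‖ < ‖L i‖ ∧ ‖L i‖ < 1) :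
    (2 * Real.pi * Complex.I)⁻¹ *
      ((∮ z in C(0, (1 : ℝ)), σ z / (z * ∏ i, jTheta p (L i / z))) -
        ∮ z in C(0, ‖p‖), σ z / (z * ∏ i, jTheta p (L i / z))) =
      ∑ i, σ (L i) / ∏ j ∈ univ.erase i, jTheta p (L j / L i) := by
  rcases Nat.eq_zero_or_pos r with hr0 | hr
  · subst hr0
    simp only [Finset.univ_eq_empty, Finset.prod_empty, Finset.sum_empty, mul_one]
    have heq : (∮ z in C(0, (1:ℝ)), σ z / z) = ∮ z in C(0, ‖p‖), σ z / z := by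
      apply Complex.circleIntegral_eq_of_differentiable_on_annulus_off_countable hp0 hp1.le
        Set.countable_empty
      · intro z hz
        obtain ⟨h1, h2⟩ := hz
        rw [Metric.mem_closedBall, dist_zero_right] at h1
        rw [Metric.mem_ball, dist_zero_right, not_lt] at h2
        have hz0 : z ≠ 0 := by
          intro h
          rw [h, norm_zero] at h2
          linarith
        exact ((hσ z (hUsub ⟨h2, h1⟩)).differentiableAt.div differentiableAt_id
          hz0).continuousAt.continuousWithinAt
      · intro z hz
        obtain ⟨⟨h1, h2⟩, _⟩ := hz
        rw [Metric.mem_ball, dist_zero_right] at h1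
        rw [Metric.mem_closedBall, dist_zero_right, not_le] at h2
        have hz0 : z ≠ 0 := by
          intro h
          rw [h, norm_zero] at h2
          linarith
        exact (hσ z (hUsub ⟨h2.le, h1.le⟩)).differentiableAt.div differentiableAt_id hz0
    rw [heq, sub_self, mul_zero]
  · exact EllipticAux.aux p (norm_pos_iff.mp hp0) hp1 σ U hU hUsub hσ r hr L hLinj hL
end

section
/- Let q₁, q₂ ∈ ℂ ∖ {0} and set q = q₁ q₂; assume q ∉ p^ℤ (equivalently ϑ(q) ≠ 0). Then ζ^E(x) = ϑ(x q₁)ϑ(x q₂)/(ϑ(x)ϑ(x q)) has residue −ϑ(q₁)ϑ(q₂)/ϑ(q) at x = 1: the function x ↦ (x − 1)·ζ^E(x) tends to −ϑ(q₁)ϑ(q₂)/ϑ(q) as x tends to 1 with x ≠ 1. -/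
open Filter Topology
open Complex

set_option maxHeartbeats 800000


noncomputable def thFactor (p z : ℂ) (s : ℕ) : ℂ :=
  (1 - p ^ (s + 1) * z) * (1 - p ^ (s + 1) * z⁻¹) / (1 - p ^ (s + 1)) ^ 2

noncomputable def thProd (p z : ℂ) : ℂ := ∏' s : ℕ, thFactor p z s

/-- The basic estimate. -/
lemma est {u v w : ℂ} {r : ℝ} (hu : ‖u‖ ≤ r) (hv : ‖v‖ ≤ r) (hw : ‖w‖ ≤ r)
    (hr : r ≤ 1/2) : ‖(1-u)*(1-v)/(1-w)^2 - 1‖ ≤ 20 * r := by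
  have hr0 : (0:ℝ) ≤ r := le_trans (norm_nonneg u) hu
  have hw1 : ‖1 - w‖ ≥ 1/2 := by
    have := norm_sub_norm_le (1:ℂ) w
    rw [norm_one] at this
    linarith
  have hwne : (1 - w) ≠ 0 := by
    intro h; rw [h, norm_zero] at hw1; linarith
  have hkey : (1-u)*(1-v)/(1-w)^2 - 1 = (-u - v + u*v + 2*w - w^2)/(1-w)^2 := by
    field_simp
    ring
  rw [hkey, norm_div]
  have hnum : ‖-u - v + u*v + 2*w - w^2‖ ≤ 5 * r := by
    calc ‖-u - v + u*v + 2*w - w^2‖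
        ≤ ‖-u - v + u*v + 2*w‖ + ‖w^2‖ := norm_sub_le _ _
      _ ≤ (‖-u - v + u*v‖ + ‖2*w‖) + ‖w^2‖ := by gcongr; exact norm_add_le _ _
      _ ≤ ((‖-u - v‖ + ‖u*v‖) + ‖2*w‖) + ‖w^2‖ := by gcongr; exact norm_add_le _ _
      _ ≤ (((‖u‖ + ‖v‖) + ‖u‖*‖v‖) + 2*‖w‖) + ‖w‖^2 := by
          have h1 : ‖-u - v‖ ≤ ‖u‖ + ‖v‖ := by
            calc ‖-u - v‖ ≤ ‖-u‖ + ‖v‖ := norm_sub_le _ _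
              _ = ‖u‖ + ‖v‖ := by rw [norm_neg]
          have h2 : ‖2*w‖ = 2*‖w‖ := by
            rw [norm_mul, Complex.norm_ofNat]
          simp only [norm_mul, norm_pow, h2]
          gcongr
      _ ≤ 5 * r := by
          nlinarith [mul_le_mul hu hv (norm_nonneg v) hr0,
            mul_le_mul hw hw (norm_nonneg w) hr0, norm_nonneg u, norm_nonneg v, norm_nonneg w]
  have hden : ((1:ℝ)/2)^2 ≤ ‖(1-w)^2‖ := by
    rw [norm_pow]; gcongr
  calc ‖-u - v + u*v + 2*w - w^2‖ / ‖(1-w)^2‖ ≤ (5*r) / ((1/2)^2) := by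
        apply div_le_div₀ (by positivity) hnum (by positivity) hden
      _ = 20 * r := by ring

lemma one_sub_pow_ne (p : ℂ) (hp1 : ‖p‖ < 1) (s : ℕ) :
    (1 : ℂ) - p ^ (s + 1) ≠ 0 := by
  have hp1' : ‖p‖ < 1 := hp1
  have : ‖p ^ (s+1)‖ < 1 := by
    rw [norm_pow]; exact pow_lt_one₀ (norm_nonneg p) hp1' (Nat.succ_ne_zero s)
  intro h
  rw [sub_eq_zero] at h
  rw [← h, norm_one] at this
  exact lt_irrefl _ this

lemma theta_aux (p : ℂ) (hp1 : ‖p‖ < 1) (a : ℂ) (ha : a ≠ 0) :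
    ∃ U ∈ 𝓝 a, ContinuousOn (thProd p) U ∧
      ((∀ s : ℕ, (1 - p^(s+1)*a) ≠ 0 ∧ (1 - p^(s+1)*a⁻¹) ≠ 0) → thProd p a ≠ 0) := by
  have hp1' : ‖p‖ < 1 := hp1
  have hna : 0 < ‖a‖ := norm_pos_iff.mpr ha
  set U : Set ℂ := Metric.closedBall a (‖a‖/2) with hUdef
  have hU : U ∈ 𝓝 a := Metric.closedBall_mem_nhds a (by positivity)
  have haU : a ∈ U := Metric.mem_closedBall_self (by positivity)
  have hzlb : ∀ z ∈ U, ‖a‖/2 ≤ ‖z‖ := by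
    intro z hz
    have hd : ‖z - a‖ ≤ ‖a‖/2 := by
      rw [← dist_eq_norm]; exact Metric.mem_closedBall.mp hz
    have := norm_sub_norm_le a z
    rw [norm_sub_rev] at this
    linarith
  have hz0 : ∀ z ∈ U, z ≠ 0 := by
    intro z hz h0
    have := hzlb z hz
    rw [h0, norm_zero] at this
    linarith
  set M : ℝ := max (max (3*‖a‖/2) (2/‖a‖)) 1 with hMdef
  have hM1 : (1:ℝ) ≤ M := le_max_right _ _
  have hM0 : (0:ℝ) < M := lt_of_lt_of_le one_pos hM1
  have hzub : ∀ z ∈ U, ‖z‖ ≤ M := by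
    intro z hz
    have hd : ‖z - a‖ ≤ ‖a‖/2 := by
      rw [← dist_eq_norm]; exact Metric.mem_closedBall.mp hz
    have h1 : ‖z‖ ≤ 3*‖a‖/2 := by
      have := norm_sub_norm_le z a
      have h2 := norm_le_norm_add_norm_sub' z a  -- maybe wrong name; fallback
      linarith [norm_sub_norm_le z a]
    exact h1.trans ((le_max_left _ _).trans (le_max_left _ _))
  have hziub : ∀ z ∈ U, ‖z⁻¹‖ ≤ M := by
    intro z hz
    rw [norm_inv]
    have h1 : ‖a‖/2 ≤ ‖z‖ := hzlb z hz
    have h2 : ‖z‖⁻¹ ≤ (‖a‖/2)⁻¹ := by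
      apply inv_anti₀ (by positivity) h1
    have : (‖a‖/2)⁻¹ = 2/‖a‖ := by field_simp
    rw [this] at h2
    exact h2.trans (((le_max_right _ _)).trans (le_max_left _ _))
  -- choose N
  have htd : Tendsto (fun n : ℕ => ‖p‖^n) atTop (𝓝 0) :=
    tendsto_pow_atTop_nhds_zero_of_lt_one (norm_nonneg p) hp1'
  obtain ⟨N, hN⟩ := eventually_atTop.mp
    (htd.eventually_lt_const (show (0:ℝ) < 1/(40*M) by positivity))
  -- the uniform bound
  have hbnd : ∀ z ∈ U, ∀ k : ℕ, ‖thFactor p z (k+N) - 1‖ ≤ 20 * (M * ‖p‖^(k+N+1))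
      ∧ M * ‖p‖^(k+N+1) ≤ 1/40 := by
    intro z hz k
    have hr40 : M * ‖p‖^(k+N+1) ≤ 1/40 := by
      have h1 : ‖p‖^(k+N+1) < 1/(40*M) := hN (k+N+1) (by omega)
      have h2 : M * ‖p‖^(k+N+1) < M * (1/(40*M)) := by
        apply mul_lt_mul_of_pos_left h1 hM0
      have : M * (1/(40*M)) = 1/40 := by field_simp
      linarith
    refine ⟨?_, hr40⟩
    have hwn : ‖p^(k+N+1)‖ = ‖p‖^(k+N+1) := norm_pow p _
    have hu : ‖p^(k+N+1) * z‖ ≤ M * ‖p‖^(k+N+1) := by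
      rw [norm_mul, hwn]
      calc ‖p‖^(k+N+1) * ‖z‖ ≤ ‖p‖^(k+N+1) * M := by
            apply mul_le_mul_of_nonneg_left (hzub z hz) (by positivity)
        _ = M * ‖p‖^(k+N+1) := mul_comm _ _
    have hv : ‖p^(k+N+1) * z⁻¹‖ ≤ M * ‖p‖^(k+N+1) := by
      rw [norm_mul, hwn]
      calc ‖p‖^(k+N+1) * ‖z⁻¹‖ ≤ ‖p‖^(k+N+1) * M := by
            apply mul_le_mul_of_nonneg_left (hziub z hz) (by positivity)
        _ = M * ‖p‖^(k+N+1) := mul_comm _ _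
    have hw : ‖p^(k+N+1)‖ ≤ M * ‖p‖^(k+N+1) := by
      rw [hwn]
      nlinarith [pow_nonneg (norm_nonneg p) (k+N+1)]
    have := est hu hv hw (by linarith)
    simpa [thFactor, show k + N + 1 = k + N + 1 by rfl] using this
  -- consequences of the bound
  have hfne : ∀ z ∈ U, ∀ k : ℕ, thFactor p z (k+N) ≠ 0 := by
    intro z hz k h0
    obtain ⟨h1, h2⟩ := hbnd z hz k
    rw [h0] at h1
    simp only [zero_sub, norm_neg, norm_one] at h1
    linarith
  have hfslit : ∀ z ∈ U, ∀ k : ℕ, thFactor p z (k+N) ∈ slitPlane := by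
    intro z hz k
    obtain ⟨h1, h2⟩ := hbnd z hz k
    have : thFactor p z (k+N) = 1 + (thFactor p z (k+N) - 1) := by ring
    rw [this]
    exact mem_slitPlane_of_norm_lt_one (by linarith)
  have hlogb : ∀ z ∈ U, ∀ k : ℕ,
      ‖Complex.log (thFactor p z (k+N))‖ ≤ (30 * (M * ‖p‖^(N+1))) * ‖p‖^k := by
    intro z hz k
    obtain ⟨h1, h2⟩ := hbnd z hz k
    have h3 : ‖thFactor p z (k+N) - 1‖ ≤ 1/2 := by linarith
    have := Complex.norm_log_one_add_half_le_self h3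
    rw [show (1:ℂ) + (thFactor p z (k+N) - 1) = thFactor p z (k+N) by ring] at this
    calc ‖Complex.log (thFactor p z (k+N))‖ ≤ 3/2 * ‖thFactor p z (k+N) - 1‖ := this
      _ ≤ 3/2 * (20 * (M * ‖p‖^(k+N+1))) := by linarith
      _ = (30 * (M * ‖p‖^(N+1))) * ‖p‖^k := by
          rw [show k+N+1 = (N+1) + k by omega, pow_add]
          ring
  have hsumgeo : Summable (fun k : ℕ => (30 * (M * ‖p‖^(N+1))) * ‖p‖^k) :=
    (summable_geometric_of_lt_one (norm_nonneg p) hp1').mul_left _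
  have hlogsum : ∀ z ∈ U, Summable (fun k : ℕ => Complex.log (thFactor p z (k+N))) := by
    intro z hz
    exact Summable.of_norm_bounded hsumgeo (hlogb z hz)
  have htail : ∀ z ∈ U, HasProd (fun k => thFactor p z (k+N))
      (Complex.exp (∑' k : ℕ, Complex.log (thFactor p z (k+N)))) := by
    intro z hz
    have h1 := (hlogsum z hz).hasSum.cexp
    have h2 : (cexp ∘ fun k => Complex.log (thFactor p z (k+N)))
        = fun k => thFactor p z (k+N) :=
      funext fun k => Complex.exp_log (hfne z hz k)
    rwa [h2] at h1
  have hsplit : ∀ z ∈ U, thProd p z = (∏ i ∈ Finset.range N, thFactor p z i) *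
      Complex.exp (∑' k : ℕ, Complex.log (thFactor p z (k+N))) := by
    intro z hz
    show (∏' s : ℕ, thFactor p z s) = _
    rw [← Multipliable.prod_mul_tprod_nat_mul' (k := N) ⟨_, htail z hz⟩, (htail z hz).tprod_eq]
  -- continuity of individual factors
  have hfc : ∀ i : ℕ, ContinuousOn (fun z => thFactor p z i) U := by
    intro i
    apply ContinuousOn.div_const
    apply ContinuousOn.mul
    · exact continuousOn_const.sub (continuousOn_const.mul continuousOn_id)
    · exact continuousOn_const.sub
        (continuousOn_const.mul (ContinuousOn.inv₀ continuousOn_id hz0))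
  have hcont : ContinuousOn (thProd p) U := by
    have hg : ContinuousOn (fun z => (∏ i ∈ Finset.range N, thFactor p z i) *
        Complex.exp (∑' k : ℕ, Complex.log (thFactor p z (k+N)))) U := by
      apply ContinuousOn.mul
      · exact continuousOn_finset_prod _ (fun i _ => hfc i)
      · apply Complex.continuous_exp.comp_continuousOn
        apply continuousOn_tsum (u := fun k : ℕ => (30 * (M * ‖p‖^(N+1))) * ‖p‖^k)
        · intro k
          exact ContinuousOn.clog (hfc (k+N)) (fun z hz => hfslit z hz k)
        · exact hsumgeo
        · exact fun k z hz => hlogb z hz k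
    exact hg.congr hsplit
  refine ⟨U, hU, hcont, ?_⟩
  intro hfac
  rw [hsplit a haU]
  apply mul_ne_zero
  · rw [Finset.prod_ne_zero_iff]
    intro i _
    have hd := one_sub_pow_ne p hp1 i
    exact div_ne_zero (mul_ne_zero (hfac i).1 (hfac i).2) (pow_ne_zero 2 hd)
  · exact Complex.exp_ne_zero _

lemma thProd_continuousAt (p : ℂ) (hp1 : ‖p‖ < 1) {a : ℂ} (ha : a ≠ 0) :
    ContinuousAt (thProd p) a := by
  obtain ⟨U, hU, hcont, -⟩ := theta_aux p hp1 a ha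
  exact hcont.continuousAt hU

lemma thProd_ne_zero (p : ℂ) (hp1 : ‖p‖ < 1) {a : ℂ} (ha : a ≠ 0)
    (h : ∀ s : ℕ, (1 - p^(s+1)*a) ≠ 0 ∧ (1 - p^(s+1)*a⁻¹) ≠ 0) : thProd p a ≠ 0 := by
  obtain ⟨U, hU, -, hne⟩ := theta_aux p hp1 a ha
  exact hne h

lemma thProd_one (p : ℂ) (hp1 : ‖p‖ < 1) : thProd p 1 = 1 := by
  have : thFactor p 1 = fun _ => (1:ℂ) := by
    funext s
    have hd := one_sub_pow_ne p hp1 s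
    simp only [thFactor, inv_one, mul_one]
    field_simp
  rw [thProd, this, tprod_one]

lemma jTheta_eq (p z : ℂ) : jTheta p z = (1 - z) * thProd p z := rfl

lemma jTheta_continuousAt (p : ℂ) (hp1 : ‖p‖ < 1) {a : ℂ} (ha : a ≠ 0) :
    ContinuousAt (jTheta p) a := by
  have : ContinuousAt (fun z => (1 - z) * thProd p z) a :=
    (continuousAt_const.sub continuousAt_id).mul (thProd_continuousAt p hp1 ha)
  exact this.congr (by filter_upwards with z using (jTheta_eq p z).symm)

/-- `ζ^E(x) = ϑ(xq₁)ϑ(xq₂)/(ϑ(x)ϑ(xq₁q₂))`. -/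
noncomputable def zetaE (p q₁ q₂ x : ℂ) : ℂ :=
  jTheta p (x * q₁) * jTheta p (x * q₂) / (jTheta p x * jTheta p (x * (q₁ * q₂)))

/-- The residue of `ζ^E` at `x = 1` is `−ϑ(q₁)ϑ(q₂)/ϑ(q)` (where `q = q₁q₂ ∉ p^ℤ`). -/
theorem zetaE_residue_at_one (p : ℂ)
    (hp0 : 0 < ‖p‖) (hp1 : ‖p‖ < 1)
    (q₁ q₂ : ℂ) (hq₁ : q₁ ≠ 0) (hq₂ : q₂ ≠ 0)
    (hq : ∀ n : ℤ, q₁ * q₂ ≠ p ^ n) :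
    Tendsto (fun x : ℂ => (x - 1) * zetaE p q₁ q₂ x) (𝓝[≠] 1)
      (𝓝 (-(jTheta p q₁ * jTheta p q₂) / jTheta p (q₁ * q₂))) := by
  have hp : p ≠ 0 := by
    intro h; rw [h, norm_zero] at hp0; exact lt_irrefl _ hp0
  set q := q₁ * q₂ with hqdef
  have hq0 : q ≠ 0 := mul_ne_zero hq₁ hq₂
  -- θ(q) ≠ 0
  have hfacq : ∀ s : ℕ, (1 - p^(s+1)*q) ≠ 0 ∧ (1 - p^(s+1)*q⁻¹) ≠ 0 := by
    intro s
    constructor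
    · intro h
      rw [sub_eq_zero] at h
      rw [eq_comm] at h
      have hinv : q = (p^(s+1))⁻¹ := eq_inv_of_mul_eq_one_right h
      apply hq (-((s+1 : ℕ) : ℤ))
      rw [hinv, zpow_neg, zpow_natCast]
    · intro h
      rw [sub_eq_zero] at h
      rw [eq_comm, mul_inv_eq_one₀ hq0] at h
      apply hq ((s+1 : ℕ) : ℤ)
      rw [zpow_natCast, ← h]
  have hq1 : q ≠ 1 := by
    intro h
    exact hq 0 (by rw [h, zpow_zero])
  have hTq : jTheta p q ≠ 0 := by
    rw [jTheta_eq]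
    exact mul_ne_zero (sub_ne_zero.mpr (fun h => hq1 h.symm)) (thProd_ne_zero p hp1 hq0 hfacq)
  -- the auxiliary function
  set G : ℂ → ℂ := fun x => -(jTheta p (x * q₁) * jTheta p (x * q₂)) /
    (thProd p x * jTheta p (x * q)) with hGdef
  have hG1 : G 1 = -(jTheta p q₁ * jTheta p q₂) / jTheta p q := by
    simp only [hGdef, one_mul, thProd_one p hp1]
  have hGt : Tendsto G (𝓝 1) (𝓝 (-(jTheta p q₁ * jTheta p q₂) / jTheta p q)) := by
    rw [← hG1]
    apply ContinuousAt.tendsto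
    apply ContinuousAt.div
    · apply ContinuousAt.neg
      apply ContinuousAt.mul
      · have h1 : ContinuousAt (jTheta p) (1 * q₁) := by
          rw [one_mul]; exact jTheta_continuousAt p hp1 hq₁
        exact h1.comp (f := fun x : ℂ => x * q₁) (continuousAt_id.mul continuousAt_const)
      · have h1 : ContinuousAt (jTheta p) (1 * q₂) := by
          rw [one_mul]; exact jTheta_continuousAt p hp1 hq₂
        exact h1.comp (f := fun x : ℂ => x * q₂) (continuousAt_id.mul continuousAt_const)
    · apply ContinuousAt.mul
      · exact thProd_continuousAt p hp1 one_ne_zero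
      · have h1 : ContinuousAt (jTheta p) (1 * q) := by
          rw [one_mul]; exact jTheta_continuousAt p hp1 hq0
        exact h1.comp (f := fun x : ℂ => x * q) (continuousAt_id.mul continuousAt_const)
    · rw [one_mul, thProd_one p hp1, one_mul]
      exact hTq
  -- eventual equality
  have hev : ∀ᶠ x in 𝓝[≠] (1:ℂ), (x - 1) * zetaE p q₁ q₂ x = G x := by
    filter_upwards [self_mem_nhdsWithin] with x hx
    have hx1 : x ≠ 1 := hx
    have h1x : (1:ℂ) - x ≠ 0 := sub_ne_zero.mpr (fun h => hx1 h.symm)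
    rw [zetaE, hGdef, jTheta_eq p x]
    set A := jTheta p (x * q₁) * jTheta p (x * q₂)
    set C := thProd p x
    set D := jTheta p (x * q)
    have : (1 - x) * C * D = (1 - x) * (C * D) := by ring
    rw [this, ← div_div]
    rw [show (x - 1) * (A / (1 - x) / (C * D)) = ((x-1) * (A / (1-x))) / (C*D) by ring]
    congr 1
    rw [show x - 1 = -(1-x) by ring]
    rw [neg_mul, mul_div_cancel₀ A h1x]
  exact Tendsto.congr' (hev.mono fun x hx => hx.symm) (hGt.mono_left nhdsWithin_le_nhds)
end
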